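/- Let q ∈ ℂ with q^{2k} ≠ 1 for 1 ≤ k ≤ ℓ. Define the projectors P^{(ℓ)} = Σ_{n=0}^{ℓ} ||ℓ,n⟩⟨ℓ,n|| and ~P^{(ℓ)} = Σ_{n=0}^{ℓ} ~||ℓ,n⟩⟨ℓ,n|| on (ℂ²)^{⊗ℓ}. Then: (i) (P^{(ℓ)})² = P^{(ℓ)}; (ii) (~P^{(ℓ)})² = ~P^{(ℓ)}; (iii) P^{(ℓ)} ~P^{(ℓ)} = P^{(ℓ)}; (iv) ~P^{(ℓ)} P^{(ℓ)} = ~P^{(ℓ)}. -/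

import Mathlib

open Matrix Complex Finset Filter

noncomputable section

/-- q-integer `[n]_q = (q^n - q^{-n})/(q - q⁻¹)`. -/
def qint (q : ℂ) (n : ℕ) : ℂ := (q ^ n - q⁻¹ ^ n) / (q - q⁻¹)

/-- q-factorial `[n]_q!`. -/
def qfact (q : ℂ) (n : ℕ) : ℂ := ∏ k ∈ Finset.range n, qint q (k + 1)

/-- q-binomial coefficient `[m ¦ n]_q`. -/
def qbinom (q : ℂ) (m n : ℕ) : ℂ := qfact q m / (qfact q (m - n) * qfact q n)

/-- The set of positions where the configuration `c` equals `1`. -/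
def oneSet {m : ℕ} (c : Fin m → Fin 2) : Finset (Fin m) :=
  Finset.univ.filter fun i => c i = 1

/-- The exponent `Σ(S) − n m + n(n−1)/2` (positions counted `1,…,m`). -/
def expKet (m n : ℕ) (S : Finset (Fin m)) : ℤ :=
  (∑ i ∈ S, ((i : ℤ) + 1)) - (n : ℤ) * (m : ℤ) + ((n * (n - 1) / 2 : ℕ) : ℤ)

/-- Coefficients of the ket `||m, n⟩` in the standard basis. -/
def ketCoef (q : ℂ) (m n : ℕ) (c : Fin m → Fin 2) : ℂ :=
  if (oneSet c).card = n then q ^ expKet m n (oneSet c) else 0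

/-- Coefficients of the bra `⟨m, n||` in the standard (bilinear) dual basis. -/
def braCoef (q : ℂ) (m n : ℕ) (c : Fin m → Fin 2) : ℂ :=
  (qbinom q m n)⁻¹ * q ^ ((n : ℤ) * ((m : ℤ) - (n : ℤ))) * ketCoef q m n c

/-- Coefficients of the tilde bra `~⟨m, n||`. -/
def tbraCoef (q : ℂ) (m n : ℕ) (c : Fin m → Fin 2) : ℂ :=
  ((m.choose n : ℂ))⁻¹ *
    (if (oneSet c).card = n then q ^ (-(expKet m n (oneSet c))) else 0)

/-- Coefficients of the tilde ket `~||m, n⟩`. -/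
def tketCoef (q : ℂ) (m n : ℕ) (c : Fin m → Fin 2) : ℂ :=
  qbinom q m n * q ^ (-((n : ℤ) * ((m : ℤ) - (n : ℤ)))) * ((m.choose n : ℂ))⁻¹ *
    (if (oneSet c).card = n then q ^ (-(expKet m n (oneSet c))) else 0)

/-- The projector `P^{(m)} = Σ_{n=0}^{m} ||m,n⟩⟨m,n||` on `(ℂ²)^{⊗m}`. -/
def PlocM (q : ℂ) (m : ℕ) : Matrix (Fin m → Fin 2) (Fin m → Fin 2) ℂ :=
  Matrix.of fun a b => ∑ n ∈ Finset.range (m + 1), ketCoef q m n a * braCoef q m n b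

/-- The projector `~P^{(m)} = Σ_{n=0}^{m} ~||m,n⟩⟨m,n||` on `(ℂ²)^{⊗m}`. -/
def tPlocM (q : ℂ) (m : ℕ) : Matrix (Fin m → Fin 2) (Fin m → Fin 2) ℂ :=
  Matrix.of fun a b => ∑ n ∈ Finset.range (m + 1), tketCoef q m n a * braCoef q m n b


def wgt {m : ℕ} (c : Fin m → Fin 2) : ℕ := ∑ i ∈ oneSet c, (i.1 + 1)

def Fsum (x : ℂ) (m n : ℕ) : ℂ :=
  ∑ c : Fin m → Fin 2, if (oneSet c).card = n then x ^ wgt c else 0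

lemma qint_key (q : ℂ) (hq0 : q ≠ 0) (a b : ℕ) :
    q ^ b * qint q a + (q ^ a)⁻¹ * qint q b = qint q (a + b) := by
  have ha : (q:ℂ) ^ a ≠ 0 := pow_ne_zero _ hq0
  have hb : (q:ℂ) ^ b ≠ 0 := pow_ne_zero _ hq0
  have key : q ^ b * (q ^ a - (q ^ a)⁻¹) + (q ^ a)⁻¹ * (q ^ b - (q ^ b)⁻¹)
      = q ^ (a + b) - (q ^ (a + b))⁻¹ := by
    rw [pow_add]; field_simp; ring
  simp only [qint, inv_pow]
  rw [mul_div_assoc', mul_div_assoc', ← add_div, key]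

lemma qfact_succ (q : ℂ) (n : ℕ) : qfact q (n + 1) = qfact q n * qint q (n + 1) := by
  rw [qfact, qfact, Finset.prod_range_succ]

lemma card_oneSet (c : Fin m → Fin 2) :
    (oneSet c).card = ∑ i : Fin m, if c i = 1 then 1 else 0 := by
  rw [oneSet, Finset.card_filter]

lemma wgt_eq (c : Fin m → Fin 2) :
    wgt c = ∑ i : Fin m, if c i = 1 then i.1 + 1 else 0 := by
  rw [wgt, oneSet, Finset.sum_filter]

lemma card_oneSet_cons (a : Fin 2) (c : Fin m → Fin 2) :
    (oneSet (Fin.cons a c)).card = (if a = 1 then 1 else 0) + (oneSet c).card := by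
  rw [card_oneSet, card_oneSet, Fin.sum_univ_succ]
  simp

lemma wgt_cons (a : Fin 2) (c : Fin m → Fin 2) :
    wgt (Fin.cons a c) = (if a = 1 then 1 else 0) + wgt c + (oneSet c).card := by
  rw [wgt_eq, wgt_eq, Fin.sum_univ_succ, card_oneSet]
  simp only [Fin.cons_zero, Fin.cons_succ, Fin.val_zero, Fin.val_succ]
  rw [add_assoc, ← Finset.sum_add_distrib]
  congr 1
  apply Finset.sum_congr rfl
  intro i _
  split_ifs <;> omega

lemma Fsum_cons (x : ℂ) (m n : ℕ) :
    Fsum x (m+1) n = (∑ c : Fin m → Fin 2,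
        if (oneSet c).card = n then x ^ (wgt c + (oneSet c).card) else 0)
      + ∑ c : Fin m → Fin 2,
        if (oneSet c).card + 1 = n then x ^ (1 + wgt c + (oneSet c).card) else 0 := by
  rw [Fsum, ← (Fin.consEquiv (fun _ : Fin (m+1) => Fin 2)).sum_comp]
  rw [Fintype.sum_prod_type, Fin.sum_univ_two]
  simp only [Fin.consEquiv, Equiv.coe_fn_mk, card_oneSet_cons, wgt_cons]
  norm_num
  simp [Nat.add_comm]

lemma Fsum_zero (x : ℂ) (m : ℕ) : Fsum x m 0 = 1 := by
  induction m with
  | zero =>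
      rw [Fsum]
      simp [oneSet, wgt]
  | succ m ih =>
      rw [Fsum_cons]
      have h2 : (∑ c : Fin m → Fin 2,
          if (oneSet c).card + 1 = 0 then x ^ (1 + wgt c + (oneSet c).card) else 0) = 0 := by
        simp
      rw [h2, add_zero, ← ih, Fsum]
      apply Finset.sum_congr rfl
      intro c _
      by_cases h : (oneSet c).card = 0 <;> simp [h]

lemma Fsum_succ_succ (x : ℂ) (m k : ℕ) :
    Fsum x (m+1) (k+1) = x ^ (k+1) * (Fsum x m (k+1) + Fsum x m k) := by
  rw [Fsum_cons]
  have h1 : (∑ c : Fin m → Fin 2,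
      if (oneSet c).card = k+1 then x ^ (wgt c + (oneSet c).card) else 0)
      = x ^ (k+1) * Fsum x m (k+1) := by
    rw [Fsum, Finset.mul_sum]
    apply Finset.sum_congr rfl
    intro c _
    by_cases h : (oneSet c).card = k+1 <;> simp [h, pow_add, mul_comm]
  have h2 : (∑ c : Fin m → Fin 2,
      if (oneSet c).card + 1 = k+1 then x ^ (1 + wgt c + (oneSet c).card) else 0)
      = x ^ (k+1) * Fsum x m k := by
    rw [Fsum, Finset.mul_sum]
    apply Finset.sum_congr rfl
    intro c _
    by_cases h : (oneSet c).card = k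
    · have : (oneSet c).card + 1 = k + 1 := by omega
      simp only [this, if_pos rfl, if_pos h]
      have he : 1 + wgt c + k = k + 1 + wgt c := by omega
      simp only [h, he, pow_add, if_true]
    · have : ¬((oneSet c).card + 1 = k + 1) := by omega
      simp [this, h]
  rw [h1, h2, mul_add]

lemma Fsum_gt (x : ℂ) (m n : ℕ) (h : m < n) : Fsum x m n = 0 := by
  rw [Fsum]
  apply Finset.sum_eq_zero
  intro c _
  have : (oneSet c).card ≤ m := by
    have := Finset.card_filter_le (Finset.univ : Finset (Fin m)) (fun i => c i = 1)
    simpa [oneSet] using this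
  have : (oneSet c).card ≠ n := by omega
  simp [this]

lemma Fsum_diag (q : ℂ) (m : ℕ) : Fsum (q^2) m m = q ^ (m * (m+1)) := by
  induction m with
  | zero => rw [Fsum]; simp [oneSet, wgt]
  | succ m ih =>
      rw [Fsum_succ_succ, Fsum_gt _ _ _ (by omega), zero_add, ih, ← pow_mul, ← pow_add]
      congr 1
      ring

lemma Fsum_choose (m : ℕ) : ∀ n, Fsum 1 m n = (m.choose n : ℂ) := by
  induction m with
  | zero =>
      intro n
      match n with
      | 0 => rw [Fsum_zero]; simp
      | n+1 => rw [Fsum_gt _ _ _ (by omega)]; simp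
  | succ m ih =>
      intro n
      match n with
      | 0 => rw [Fsum_zero]; simp
      | k+1 =>
          rw [Fsum_succ_succ, ih, ih, Nat.choose_succ_succ]
          push_cast
          ring

lemma step_scalar (q : ℂ) (hq0 : q ≠ 0) (a k : ℕ) :
    (q^2)^(k+1) * (qint q (a+1) * q^((k+1)*(a+k+2)) + qint q (k+1) * q^(k*(a+k+2)))
      = q^((k+1)*(a+k+3)) * qint q ((a+1)+(k+1)) := by
  rw [← qint_key q hq0 (a+1) (k+1)]
  have ha : (q:ℂ) ^ (a+1) ≠ 0 := pow_ne_zero _ hq0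
  field_simp
  ring

lemma Fsum_main (q : ℂ) (hq0 : q ≠ 0) (m : ℕ) : ∀ n, n ≤ m →
    Fsum (q^2) m n * (qfact q (m - n) * qfact q n) = q ^ (n * (m+1)) * qfact q m := by
  induction m with
  | zero =>
      intro n hn
      interval_cases n
      rw [Fsum_zero]
      simp [qfact]
  | succ m ih =>
      intro n hn
      match n with
      | 0 =>
          rw [Fsum_zero]
          simp [qfact]
      | k+1 =>
          rcases Nat.lt_or_ge k m with hk | hk
          · -- k+1 <= m
            obtain ⟨a, rfl⟩ : ∃ a, m = a + k + 1 := ⟨m - (k+1), by omega⟩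
            have e1 : a + k + 1 + 1 - (k+1) = a + 1 := by omega
            have e2 : a + k + 1 - (k+1) = a := by omega
            have e3 : a + k + 1 - k = a + 1 := by omega
            have IH1 := ih (k+1) (by omega)
            have IH2 := ih k (by omega)
            rw [e2, qfact_succ q k] at IH1
            rw [e3, qfact_succ q a] at IH2
            have hs := step_scalar q hq0 a k
            have harg : a + 1 + (k+1) = a + k + 1 + 1 := by omega
            rw [harg] at hs
            rw [e1, Fsum_succ_succ, qfact_succ q (a+k+1), qfact_succ q a, qfact_succ q k]
            linear_combination (q^2)^(k+1) * qint q (a+1) * IH1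
              + (q^2)^(k+1) * qint q (k+1) * IH2 + qfact q (a+k+1) * hs
          · -- n = m+1
            have hkm : k = m := by omega
            subst hkm
            rw [Fsum_succ_succ, Fsum_gt _ _ _ (by omega), Fsum_diag, zero_add, Nat.sub_self]
            have h0 : qfact q 0 = 1 := by rw [qfact]; simp
            rw [h0]
            ring

lemma qint_ne (q : ℂ) (hq0 : q ≠ 0) (h1 : q^2 ≠ 1) (k : ℕ)
    (hk : q ^ (2*k) ≠ 1) : qint q k ≠ 0 := by
  have hd : q - q⁻¹ ≠ 0 := by
    intro h
    apply h1
    have hqq : q = q⁻¹ := by linear_combination h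
    calc q^2 = q * q := sq q
    _ = q * q⁻¹ := by nth_rewrite 2 [hqq]; rfl
    _ = 1 := mul_inv_cancel₀ hq0
  rw [qint]
  intro h
  rcases div_eq_zero_iff.mp h with h' | h'
  · apply hk
    have hqk : q ^ k = q⁻¹ ^ k := by linear_combination h'
    calc q ^ (2*k) = q ^ k * q ^ k := by rw [two_mul, pow_add]
    _ = q ^ k * q⁻¹ ^ k := by nth_rewrite 2 [hqk]; rfl
    _ = 1 := by rw [← mul_pow, mul_inv_cancel₀ hq0, one_pow]
  · exact hd h'

lemma qfact_ne (q : ℂ) (hq0 : q ≠ 0) (m : ℕ)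
    (hq : ∀ k : ℕ, 1 ≤ k → k ≤ m → q ^ (2 * k) ≠ 1) :
    ∀ n, n ≤ m → qfact q n ≠ 0 := by
  intro n hn
  rw [qfact]
  apply Finset.prod_ne_zero_iff.mpr
  intro k hk
  rw [Finset.mem_range] at hk
  have h1 : q ^ 2 ≠ 1 := by
    have := hq 1 le_rfl (by omega)
    simpa using this
  exact qint_ne q hq0 h1 (k+1) (hq (k+1) (by omega) (by omega))

lemma qbinom_ne (q : ℂ) (hq0 : q ≠ 0) (m : ℕ)
    (hq : ∀ k : ℕ, 1 ≤ k → k ≤ m → q ^ (2 * k) ≠ 1) (n : ℕ) (hn : n ≤ m) :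
    qbinom q m n ≠ 0 :=
  div_ne_zero (qfact_ne q hq0 m hq m le_rfl)
    (mul_ne_zero (qfact_ne q hq0 m hq (m-n) (by omega)) (qfact_ne q hq0 m hq n hn))

lemma Fsum_eq_qbinom (q : ℂ) (hq0 : q ≠ 0) (m : ℕ)
    (hq : ∀ k : ℕ, 1 ≤ k → k ≤ m → q ^ (2 * k) ≠ 1) (n : ℕ) (hn : n ≤ m) :
    Fsum (q^2) m n = q ^ (n*(m+1)) * qbinom q m n := by
  have hD : qfact q (m - n) * qfact q n ≠ 0 :=
    mul_ne_zero (qfact_ne q hq0 m hq (m-n) (by omega)) (qfact_ne q hq0 m hq n hn)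
  rw [qbinom, mul_div_assoc']
  rw [eq_div_iff hD]
  exact Fsum_main q hq0 m n hn

lemma two_T (n : ℕ) : 2 * ((n * (n - 1) / 2 : ℕ) : ℤ) = (n:ℤ) * (n:ℤ) - (n:ℤ) := by
  match n with
  | 0 => simp
  | k+1 =>
    have h2 : 2 ∣ (k+1) * k := by
      rcases Nat.even_or_odd k with ⟨t, ht⟩ | ⟨t, ht⟩
      · exact Dvd.dvd.mul_left ⟨t, by omega⟩ _
      · exact Dvd.dvd.mul_right ⟨t+1, by omega⟩ _
    obtain ⟨t, ht⟩ := h2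
    have hs : (k+1) * (k+1-1) / 2 = t := by
      simp only [Nat.add_sub_cancel]
      omega
    rw [hs]
    have hc := congrArg (Nat.cast : ℕ → ℤ) ht
    push_cast at hc ⊢
    linear_combination -hc

lemma sum_ket_sq (q : ℂ) (hq0 : q ≠ 0) (m n : ℕ) :
    ∑ c : Fin m → Fin 2, ketCoef q m n c * ketCoef q m n c
      = q ^ (2*((n * (n - 1) / 2 : ℕ) : ℤ) - 2*(n:ℤ)*(m:ℤ)) * Fsum (q^2) m n := by
  rw [Fsum, Finset.mul_sum]
  apply Finset.sum_congr rfl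
  intro c _
  by_cases h : (oneSet c).card = n
  · simp only [ketCoef, if_pos h]
    have hw : (∑ i ∈ oneSet c, ((i:ℤ)+1)) = ((wgt c : ℕ) : ℤ) := by
      rw [wgt]
      push_cast
      rfl
    rw [← zpow_add₀ hq0, expKet, hw]
    have he : (((wgt c : ℕ):ℤ) - (n:ℤ)*(m:ℤ) + ((n * (n - 1) / 2 : ℕ) : ℤ))
        + (((wgt c : ℕ):ℤ) - (n:ℤ)*(m:ℤ) + ((n * (n - 1) / 2 : ℕ) : ℤ))
        = (2*((n * (n - 1) / 2 : ℕ) : ℤ) - 2*(n:ℤ)*(m:ℤ)) + ((2 * wgt c : ℕ) : ℤ) := by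
      push_cast
      ring
    rw [he, zpow_add₀ hq0, zpow_natCast, pow_mul]
  · simp [ketCoef, h]

lemma pair_ket (q : ℂ) (hq0 : q ≠ 0) (m : ℕ)
    (hq : ∀ k : ℕ, 1 ≤ k → k ≤ m → q ^ (2 * k) ≠ 1) (n n' : ℕ)
    (hn : n ≤ m) (hn' : n' ≤ m) :
    ∑ c : Fin m → Fin 2, braCoef q m n c * ketCoef q m n' c
      = if n = n' then 1 else 0 := by
  by_cases hnn : n = n'
  · subst hnn
    rw [if_pos rfl]
    have h1 : ∑ c : Fin m → Fin 2, braCoef q m n c * ketCoef q m n c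
        = (qbinom q m n)⁻¹ * q ^ ((n : ℤ) * ((m : ℤ) - (n : ℤ)))
          * ∑ c : Fin m → Fin 2, ketCoef q m n c * ketCoef q m n c := by
      rw [Finset.mul_sum]
      apply Finset.sum_congr rfl
      intro c _
      rw [braCoef]
      ring
    rw [h1, sum_ket_sq q hq0, Fsum_eq_qbinom q hq0 m hq n hn]
    have hbin := qbinom_ne q hq0 m hq n hn
    have hz : q ^ ((n : ℤ) * ((m : ℤ) - (n : ℤ)))
        * (q ^ (2*((n * (n - 1) / 2 : ℕ) : ℤ) - 2*(n:ℤ)*(m:ℤ)) * q ^ (((n*(m+1) : ℕ)):ℤ)) = 1 := by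
      rw [← zpow_add₀ hq0, ← zpow_add₀ hq0]
      have hE : (n : ℤ) * ((m : ℤ) - (n : ℤ))
          + ((2*((n * (n - 1) / 2 : ℕ) : ℤ) - 2*(n:ℤ)*(m:ℤ)) + (((n*(m+1) : ℕ)):ℤ)) = 0 := by
        have hT := two_T n
        rw [Nat.cast_mul, Nat.cast_add, Nat.cast_one]
        linear_combination hT
      rw [hE, zpow_zero]
    calc (qbinom q m n)⁻¹ * q ^ ((n : ℤ) * ((m : ℤ) - (n : ℤ)))
          * (q ^ (2*((n * (n - 1) / 2 : ℕ) : ℤ) - 2*(n:ℤ)*(m:ℤ)) * (q ^ (n*(m+1)) * qbinom q m n))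
        = ((qbinom q m n)⁻¹ * qbinom q m n) * (q ^ ((n : ℤ) * ((m : ℤ) - (n : ℤ)))
          * (q ^ (2*((n * (n - 1) / 2 : ℕ) : ℤ) - 2*(n:ℤ)*(m:ℤ)) * q ^ (((n*(m+1) : ℕ)):ℤ))) := by
          rw [zpow_natCast]
          ring
    _ = 1 := by rw [inv_mul_cancel₀ hbin, hz, mul_one]
  · rw [if_neg hnn]
    apply Finset.sum_eq_zero
    intro c _
    rw [braCoef, ketCoef, ketCoef]
    split_ifs with h1 h2
    · omega
    · ring
    · ring
    · ring

lemma pair_tket (q : ℂ) (hq0 : q ≠ 0) (m : ℕ)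
    (hq : ∀ k : ℕ, 1 ≤ k → k ≤ m → q ^ (2 * k) ≠ 1) (n n' : ℕ)
    (hn : n ≤ m) (hn' : n' ≤ m) :
    ∑ c : Fin m → Fin 2, braCoef q m n c * tketCoef q m n' c
      = if n = n' then 1 else 0 := by
  by_cases hnn : n = n'
  · subst hnn
    rw [if_pos rfl]
    have hbin := qbinom_ne q hq0 m hq n hn
    have hch : ((m.choose n : ℕ) : ℂ) ≠ 0 := by
      exact_mod_cast Nat.cast_ne_zero.mpr (Nat.choose_pos hn).ne'
    have h1 : ∑ c : Fin m → Fin 2, braCoef q m n c * tketCoef q m n c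
        = ((qbinom q m n)⁻¹ * q ^ ((n : ℤ) * ((m : ℤ) - (n : ℤ)))
            * (qbinom q m n * q ^ (-((n : ℤ) * ((m : ℤ) - (n : ℤ)))) * ((m.choose n : ℂ))⁻¹))
          * ∑ c : Fin m → Fin 2, (if (oneSet c).card = n then (1:ℂ) else 0) := by
      rw [Finset.mul_sum]
      apply Finset.sum_congr rfl
      intro c _
      rw [braCoef, tketCoef, ketCoef]
      by_cases h : (oneSet c).card = n
      · simp only [if_pos h]
        have hcancel : q ^ expKet m n (oneSet c) * q ^ (-(expKet m n (oneSet c))) = 1 := by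
          rw [← zpow_add₀ hq0, add_neg_cancel, zpow_zero]
        linear_combination ((qbinom q m n)⁻¹ * q ^ ((n:ℤ)*((m:ℤ)-(n:ℤ)))
          * (qbinom q m n * q ^ (-((n:ℤ)*((m:ℤ)-(n:ℤ)))) * ((m.choose n : ℂ))⁻¹)) * hcancel
      · simp [h]
    rw [h1]
    have h2 : ∑ c : Fin m → Fin 2, (if (oneSet c).card = n then (1:ℂ) else 0)
        = (m.choose n : ℂ) := by
      rw [← Fsum_choose m n, Fsum]
      apply Finset.sum_congr rfl
      intro c _
      split_ifs <;> simp
    rw [h2]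
    have hz : q ^ ((n : ℤ) * ((m : ℤ) - (n : ℤ))) * q ^ (-((n : ℤ) * ((m : ℤ) - (n : ℤ)))) = 1 := by
      rw [← zpow_add₀ hq0, add_neg_cancel, zpow_zero]
    calc (qbinom q m n)⁻¹ * q ^ ((n : ℤ) * ((m : ℤ) - (n : ℤ)))
          * (qbinom q m n * q ^ (-((n : ℤ) * ((m : ℤ) - (n : ℤ)))) * ((m.choose n : ℂ))⁻¹)
          * (m.choose n : ℂ)
        = ((qbinom q m n)⁻¹ * qbinom q m n)
          * (q ^ ((n : ℤ) * ((m : ℤ) - (n : ℤ))) * q ^ (-((n : ℤ) * ((m : ℤ) - (n : ℤ)))))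
          * (((m.choose n : ℂ))⁻¹ * (m.choose n : ℂ)) := by ring
    _ = 1 := by rw [inv_mul_cancel₀ hbin, hz, inv_mul_cancel₀ hch]; norm_num
  · rw [if_neg hnn]
    apply Finset.sum_eq_zero
    intro c _
    rw [braCoef, ketCoef, tketCoef]
    split_ifs with h1 h2
    · omega
    · ring
    · ring
    · ring

def Km (q : ℂ) (m : ℕ) : Matrix (Fin m → Fin 2) (Fin (m+1)) ℂ :=
  Matrix.of fun c n => ketCoef q m (n : ℕ) c
def tKm (q : ℂ) (m : ℕ) : Matrix (Fin m → Fin 2) (Fin (m+1)) ℂ :=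
  Matrix.of fun c n => tketCoef q m (n : ℕ) c
def Bm (q : ℂ) (m : ℕ) : Matrix (Fin (m+1)) (Fin m → Fin 2) ℂ :=
  Matrix.of fun n c => braCoef q m (n : ℕ) c

lemma P_eq (q : ℂ) (m : ℕ) : PlocM q m = Km q m * Bm q m := by
  ext a b
  rw [Matrix.mul_apply, PlocM]
  simp only [Matrix.of_apply, Km, Bm]
  rw [Finset.sum_range fun n => ketCoef q m n a * braCoef q m n b]

lemma tP_eq (q : ℂ) (m : ℕ) : tPlocM q m = tKm q m * Bm q m := by
  ext a b
  rw [Matrix.mul_apply, tPlocM]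
  simp only [Matrix.of_apply, tKm, Bm]
  rw [Finset.sum_range fun n => tketCoef q m n a * braCoef q m n b]

lemma BK_eq (q : ℂ) (hq0 : q ≠ 0) (m : ℕ)
    (hq : ∀ k : ℕ, 1 ≤ k → k ≤ m → q ^ (2 * k) ≠ 1) :
    Bm q m * Km q m = 1 := by
  ext n n'
  rw [Matrix.mul_apply, Matrix.one_apply]
  simp only [Bm, Km, Matrix.of_apply]
  rw [pair_ket q hq0 m hq (n:ℕ) (n':ℕ) (by omega) (by omega)]
  by_cases h : n = n'
  · simp [h]
  · have h' : (n : ℕ) ≠ (n' : ℕ) := fun hc => h (Fin.ext hc)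
    simp [h, h']

lemma BtK_eq (q : ℂ) (hq0 : q ≠ 0) (m : ℕ)
    (hq : ∀ k : ℕ, 1 ≤ k → k ≤ m → q ^ (2 * k) ≠ 1) :
    Bm q m * tKm q m = 1 := by
  ext n n'
  rw [Matrix.mul_apply, Matrix.one_apply]
  simp only [Bm, tKm, Matrix.of_apply]
  rw [pair_tket q hq0 m hq (n:ℕ) (n':ℕ) (by omega) (by omega)]
  by_cases h : n = n'
  · simp [h]
  · have h' : (n : ℕ) ≠ (n' : ℕ) := fun hc => h (Fin.ext hc)
    simp [h, h']


/-- Idempotency and compatibility of the projectors `P^{(m)}` and `~P^{(m)}`. -/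
theorem statement12 (q : ℂ) (hq0 : q ≠ 0) (m : ℕ)
    (hq : ∀ k : ℕ, 1 ≤ k → k ≤ m → q ^ (2 * k) ≠ 1) :
    (PlocM q m * PlocM q m = PlocM q m) ∧
    (tPlocM q m * tPlocM q m = tPlocM q m) ∧
    (PlocM q m * tPlocM q m = PlocM q m) ∧
    (tPlocM q m * PlocM q m = tPlocM q m) := by
  have hP := P_eq q m
  have htP := tP_eq q m
  have hBK := BK_eq q hq0 m hq
  have hBtK := BtK_eq q hq0 m hq
  refine ⟨?_, ?_, ?_, ?_⟩
  · rw [hP, Matrix.mul_assoc, ← Matrix.mul_assoc (Bm q m), hBK, Matrix.one_mul]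
  · rw [htP, Matrix.mul_assoc, ← Matrix.mul_assoc (Bm q m), hBtK, Matrix.one_mul]
  · rw [hP, htP, Matrix.mul_assoc, ← Matrix.mul_assoc (Bm q m), hBtK, Matrix.one_mul]
  · rw [htP, hP, Matrix.mul_assoc, ← Matrix.mul_assoc (Bm q m), hBK, Matrix.one_mul]
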